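/- Let ρ ∈ (0,1], let N ≥ 1, and let (a_j)_{j ≥ N} and (b_j)_{j ≥ N} be sequences of reals satisfying 0 ≤ b_j ≤ a_j ≤ 1 for all j ≥ N, a_j → 1 as j → ∞, and b_j ≥ b_{j−1} + (ρ/j)·(a_{j−1} − b_{j−1}) for all j > N. Then b_j → 1 as j → ∞. -/
import Mathlib


open Filter

/-- Inductive step (milestone k−1 to k) of the convergence argument of Theorem 1 of the
paper: if `0 ≤ b_j ≤ a_j ≤ 1`, `a_j → 1`, and
`b_j ≥ b_{j−1} + (ρ/j)(a_{j−1} − b_{j−1})` for `j > N`, then `b_j → 1`. -/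
theorem stmt_7 (ρ : ℝ) (hρ : ρ ∈ Set.Ioc (0:ℝ) 1) (N : ℕ) (hN : 1 ≤ N)
    (a b : ℕ → ℝ)
    (hbound : ∀ j : ℕ, N ≤ j → 0 ≤ b j ∧ b j ≤ a j ∧ a j ≤ 1)
    (ha : Tendsto a atTop (nhds 1))
    (hrec : ∀ j : ℕ, N < j → b j ≥ b (j - 1) + (ρ / j) * (a (j - 1) - b (j - 1))) :
    Tendsto b atTop (nhds 1) := by
  obtain ⟨hρ0, hρ1⟩ := hρ
  -- step inequality in convenient form
  have hstep : ∀ j : ℕ, N ≤ j → b (j+1) ≥ b j + (ρ / (j+1 : ℕ)) * (a j - b j) := by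
    intro j hj
    have h := hrec (j+1) (by omega)
    simpa using h
  -- monotonicity on [N, ∞)
  have hmono : ∀ i j : ℕ, N ≤ i → i ≤ j → b i ≤ b j := by
    intro i j hNi hij
    induction j, hij using Nat.le_induction with
    | base => exact le_refl _
    | succ j hij ih =>
      have hNj : N ≤ j := le_trans hNi hij
      have h1 := hstep j hNj
      have hb := hbound j hNj
      have hpos : (0:ℝ) ≤ (ρ / (j+1 : ℕ)) * (a j - b j) := by
        apply mul_nonneg
        · apply div_nonneg hρ0.le
          positivity
        · linarith [hb.2.1]
      linarith
  -- the shifted sequence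
  set c : ℕ → ℝ := fun n => b (N + n) with hc
  have hcmono : Monotone c := by
    intro m n hmn
    exact hmono (N + m) (N + n) (Nat.le_add_right _ _) (by omega)
  have hcbdd : BddAbove (Set.range c) := by
    refine ⟨1, ?_⟩
    rintro x ⟨n, rfl⟩
    exact (hbound (N + n) (Nat.le_add_right _ _)).2.2.trans' (hbound (N + n) (Nat.le_add_right _ _)).2.1
  set L : ℝ := ⨆ n, c n with hL
  have hctend : Tendsto c atTop (nhds L) := tendsto_atTop_ciSup hcmono hcbdd
  have hble : ∀ j : ℕ, N ≤ j → b j ≤ L := by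
    intro j hj
    have : c (j - N) = b j := by simp [hc, Nat.add_sub_cancel' hj]
    calc b j = c (j - N) := this.symm
    _ ≤ L := le_ciSup hcbdd _
  have hL1 : L ≤ 1 := by
    apply ciSup_le
    intro n
    exact (hbound (N + n) (Nat.le_add_right _ _)).2.1.trans
      (hbound (N + n) (Nat.le_add_right _ _)).2.2
  -- b tends to L
  have hbtend : Tendsto b atTop (nhds L) := by
    have h1 : Tendsto (fun j : ℕ => c (j - N)) atTop (nhds L) :=
      hctend.comp (tendsto_sub_atTop_nat N)
    apply h1.congr'
    filter_upwards [eventually_ge_atTop N] with j hj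
    simp [hc, Nat.add_sub_cancel' hj]
  -- Show L = 1
  by_cases hLlt : L < 1
  · exfalso
    set δ : ℝ := (1 - L) / 2 with hδ
    have hδpos : 0 < δ := by simp [hδ]; linarith
    have haev : ∀ᶠ j in atTop, 1 - δ ≤ a j := by
      exact ha.eventually (eventually_ge_nhds (by linarith : 1 - δ < 1))
    obtain ⟨M, hM⟩ := (haev.and (eventually_ge_atTop N)).exists_forall_of_atTop
    have hMN : N ≤ M := (hM M le_rfl).2
    -- harmonic partial sums
    set H : ℕ → ℝ := fun n => ∑ i ∈ Finset.range n, (1 : ℝ) / (i : ℝ) with hH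
    have key : ∀ J : ℕ, M ≤ J → b J ≥ b M + ρ * δ * (H (J+1) - H (M+1)) := by
      intro J hJ
      induction J, hJ using Nat.le_induction with
      | base => simp
      | succ J hJ ih =>
        have hNJ : N ≤ J := le_trans hMN hJ
        have h1 := hstep J hNJ
        have haJ : 1 - δ ≤ a J := (hM J hJ).1
        have hbJ : b J ≤ L := hble J hNJ
        have hdiff : δ ≤ a J - b J := by
          have : L ≤ 1 - δ - δ := by simp [hδ]; linarith
          linarith
        have hcoef : (0:ℝ) < ρ / (J+1 : ℕ) := by
          apply div_pos hρ0
          positivity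
        have h2 : (ρ / (J+1 : ℕ)) * δ ≤ (ρ / (J+1 : ℕ)) * (a J - b J) :=
          mul_le_mul_of_nonneg_left hdiff hcoef.le
        have hHsucc : H (J+2) = H (J+1) + 1 / ((J+1 : ℕ) : ℝ) := by
          simp [hH, Finset.sum_range_succ]
        have hring : ρ * δ * (H (J+2) - H (M+1))
            = ρ * δ * (H (J+1) - H (M+1)) + (ρ / ((J+1:ℕ):ℝ)) * δ := by
          rw [hHsucc]; ring
        have : b (J+1) ≥ b J + (ρ / (J+1 : ℕ)) * δ := by linarith
        rw [show J + 1 + 1 = J + 2 from rfl, hring]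
        linarith
    -- divergence of H (J+1)
    have hHtend : Tendsto (fun J : ℕ => H (J+1)) atTop atTop := by
      have heq : ∀ n : ℕ, H (n+1) = ∑ i ∈ Finset.range n, (1 : ℝ) / (i + 1) := by
        intro n
        simp only [hH]
        rw [Finset.sum_range_succ']
        simp
      have := Real.tendsto_sum_range_one_div_nat_succ_atTop
      apply this.congr
      intro n
      rw [heq n]
    have hlbtend : Tendsto (fun J : ℕ => b M + ρ * δ * (H (J+1) - H (M+1))) atTop atTop := by
      apply tendsto_atTop_add_const_left
      apply Tendsto.const_mul_atTop (by positivity : (0:ℝ) < ρ * δ)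
      exact tendsto_atTop_add_const_right _ _ hHtend
    obtain ⟨J, hJ1, hJ2⟩ := ((hlbtend.eventually_gt_atTop 1).and (eventually_ge_atTop M)).exists
    have hbJ := key J hJ2
    have : b J ≤ 1 := (hbound J (le_trans hMN hJ2)).2.1.trans
      (hbound J (le_trans hMN hJ2)).2.2
    linarith
  · have : L = 1 := le_antisymm hL1 (not_lt.mp hLlt)
    rwa [this] at hbtend
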